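/- Let H ≥ 2 and T ≥ 1, and for 1 ≤ j ≤ T set x_j = H^j/(H^T + 1). Then the points x_1, …, x_T are pairwise distinct elements of [0, 1], f(x_j) = x_{j+1} for 1 ≤ j ≤ T − 1, and f(x_T) = x_1; that is, (x_1, …, x_T) is a T-cycle of the generalized tent map f. -/

import Mathlib

/-- The generalized tent map. -/
noncomputable def tent (H : ℝ) (x : ℝ) : ℝ := if x ≤ 1 / 2 then H * x else H * (1 - x)

theorem explicit_T_cycle (H : ℝ) (hH : 2 ≤ H) (T : ℕ) (hT : 1 ≤ T)
    (x : ℕ → ℝ) (hx : ∀ j : ℕ, x j = H ^ j / (H ^ T + 1)) :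
    (∀ i, 1 ≤ i → i ≤ T → ∀ j, 1 ≤ j → j ≤ T → x i = x j → i = j) ∧
    (∀ j, 1 ≤ j → j ≤ T → x j ∈ Set.Icc (0 : ℝ) 1) ∧
    (∀ j, 1 ≤ j → j ≤ T - 1 → tent H (x j) = x (j + 1)) ∧
    tent H (x T) = x 1 := by
  have h1 : (1 : ℝ) < H := lt_of_lt_of_le one_lt_two hH
  have h0 : (0 : ℝ) < H := lt_trans one_pos h1
  have hD : (0 : ℝ) < H ^ T + 1 := by positivity
  refine ⟨?_, ?_, ?_, ?_⟩
  · intro i _ _ j _ _ hij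
    rw [hx, hx, div_eq_div_iff (ne_of_gt hD) (ne_of_gt hD)] at hij
    have hpow : H ^ i = H ^ j := mul_right_cancel₀ (ne_of_gt hD) hij
    exact (pow_right_strictMono₀ h1).injective hpow
  · intro j _ hjT
    rw [hx]
    constructor
    · positivity
    · rw [div_le_one hD]
      have : H ^ j ≤ H ^ T := pow_le_pow_right₀ h1.le hjT
      linarith
  · intro j hj1 hjT
    have hj1T : j + 1 ≤ T := by omega
    have hle : x j ≤ 1 / 2 := by
      rw [hx, div_le_div_iff₀ hD two_pos]
      have h2 : H ^ (j + 1) ≤ H ^ T := pow_le_pow_right₀ h1.le hj1T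
      have h3 : 2 * H ^ j ≤ H * H ^ j := by nlinarith [pow_pos h0 j]
      rw [pow_succ] at h2
      nlinarith
    rw [tent, if_pos hle, hx, hx, pow_succ]
    ring
  · have hgt : ¬ x T ≤ 1 / 2 := by
      rw [hx, not_le, div_lt_div_iff₀ two_pos hD]
      have : (1 : ℝ) < H ^ T := one_lt_pow₀ h1 (by omega)
      nlinarith
    rw [tent, if_neg hgt, hx, hx, pow_one]
    field_simp
    ring
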